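/- The coefficients of the Felder–Varchenko dynamical representation satisfy the intertwining identity corresponding to the relation γ(z)α(q²z) = α(z)γ(q²z): for every integer k ≥ 1 and all λ, ω ∈ ℂ and nonzero complex z for which all theta factors appearing in denominators are nonzero, C_k(λ, z)·A_k(λ−1, q²z) = A_{k−1}(λ, z)·C_k(λ−1, q²z). -/

import Mathlib

noncomputable section

open Finset

/-- The normalized Jacobi theta function `θ(z) = ∏_{j≥0} (1 - z p^j)(1 - p^{j+1}/z)`. -/
def theta (p : ℝ) (z : ℂ) : ℂ :=
  ∏' j : ℕ, ((1 - z * (p : ℂ) ^ j) * (1 - (p : ℂ) ^ (j + 1) / z))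

/-- Complex power `q ^ l := exp (l · log q)` for a real base `q`. -/
def qp (q : ℝ) (l : ℂ) : ℂ := Complex.exp (l * (Real.log q : ℂ))

/-- Elliptic Pochhammer symbol `(a)_n = ∏_{i=0}^{n-1} θ(a q^{2i})` in base `q², p`. -/
def epoch (p q : ℝ) (a : ℂ) (n : ℕ) : ℂ :=
  ∏ i ∈ Finset.range n, theta p (a * qp q (2 * (i : ℂ)))

/-- Elliptic binomial coefficient `[k over l] = ∏_{i=1}^{l} θ(q^{2(k-l+i)})/θ(q^{2i})`. -/
def ellbin (p q : ℝ) (k l : ℕ) : ℂ :=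
  ∏ i ∈ Finset.range l,
    theta p (qp q (2 * ((k : ℂ) - (l : ℂ) + (i : ℂ) + 1))) / theta p (qp q (2 * ((i : ℂ) + 1)))

/-- Entry `a(λ,z)` of the Andrews–Baxter–Forrester `R`-matrix. -/
def Ra (p q : ℝ) (lam z : ℂ) : ℂ :=
  theta p z * theta p (qp q (2 * (lam + 2))) /
    (theta p (qp q 2 * z) * theta p (qp q (2 * (lam + 1))))

/-- Entry `b(λ,z)` of the Andrews–Baxter–Forrester `R`-matrix. -/
def Rb (p q : ℝ) (lam z : ℂ) : ℂ :=
  theta p (qp q 2) * theta p (qp q (-2 * (lam + 1)) * z) /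
    (theta p (qp q 2 * z) * theta p (qp q (-2 * (lam + 1))))

/-- Entry `c(λ,z)` of the Andrews–Baxter–Forrester `R`-matrix. -/
def Rc (p q : ℝ) (lam z : ℂ) : ℂ :=
  theta p (qp q 2) * theta p (qp q (2 * (lam + 1)) * z) /
    (theta p (qp q 2 * z) * theta p (qp q (2 * (lam + 1))))

/-- Entry `d(λ,z)` of the Andrews–Baxter–Forrester `R`-matrix. -/
def Rd (p q : ℝ) (lam z : ℂ) : ℂ :=
  theta p z * theta p (qp q (-2 * lam)) /
    (theta p (qp q 2 * z) * theta p (qp q (-2 * (lam + 1))))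

/-- Coefficient `A_k(λ,z)` of the Felder–Varchenko dynamical representation `π^ω`. -/
def Ak (p q : ℝ) (om : ℂ) (k : ℕ) (lam z : ℂ) : ℂ :=
  qp q (2 * (k : ℂ)) * theta p (qp q (-2 * (lam + 1) - 2 * (k : ℂ))) *
      theta p (z * qp q (om - 2 * (k : ℂ) + 1)) /
    (theta p (qp q (-2 * (lam + 1))) * theta p (z * qp q (om + 1)))

/-- Coefficient `B_k(λ,z)` of the Felder–Varchenko dynamical representation `π^ω`. -/
def Bk (p q : ℝ) (om : ℂ) (k : ℕ) (lam z : ℂ) : ℂ :=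
  qp q (k : ℂ) * theta p (qp q 2) *
      theta p (z * qp q (-2 * (lam + 1) + om - 2 * (k : ℂ) - 1)) /
    (theta p (qp q (-2 * (lam + 1))) * theta p (z * qp q (om + 1)))

/-- Coefficient `C_k(λ,z)` of the Felder–Varchenko dynamical representation `π^ω`;
`C_0 = 0`. -/
def Ck (p q : ℝ) (om : ℂ) (k : ℕ) (lam z : ℂ) : ℂ :=
  if k = 0 then 0
  else
    qp q (-((k : ℂ) - 1)) * theta p (qp q (2 * (k : ℂ))) *
        theta p (qp q (2 * (om - (k : ℂ) + 1))) *
        theta p (z * qp q (2 * (lam + 1) - om + 2 * (k : ℂ) - 1)) /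
      (theta p (qp q 2) * theta p (qp q (2 * (lam + 1))) * theta p (z * qp q (om + 1)))

/-- Coefficient `D_k(λ,z)` of the Felder–Varchenko dynamical representation `π^ω`. -/
def Dk (p q : ℝ) (om : ℂ) (k : ℕ) (lam z : ℂ) : ℂ :=
  theta p (qp q (-2 * (lam + 1 - om + (k : ℂ)))) * theta p (z * qp q (-om + 2 * (k : ℂ) + 1)) /
    (theta p (qp q (-2 * (lam + 1))) * theta p (z * qp q (om + 1)))

/-- `F(μ) = q^μ θ(q^{-2(μ+1)})`. -/
def Fdet (p q : ℝ) (mu : ℂ) : ℂ := qp q mu * theta p (qp q (-2 * (mu + 1)))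

/-- The coefficient `C_{kl}(μ)` from the corepresentation matrix elements. -/
def Ckl (p q : ℝ) (k l : ℕ) (mu : ℂ) : ℂ :=
  ellbin p q k l * epoch p q (qp q (2 * (mu - (l : ℂ) + 2))) l /
    epoch p q (qp q (2 * (mu + (k : ℂ) - 2 * (l : ℂ) + 2))) l

/-- The terminating balanced very-well-poised elliptic hypergeometric series
`₁₀ω₉(a₁; a₄,…,a₁₀)`, truncated at `n`. -/
def tenW9 (p q : ℝ) (n : ℕ) (a1 a4 a5 a6 a7 a8 a9 a10 : ℂ) : ℂ :=
  ∑ k ∈ Finset.range (n + 1),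
    theta p (a1 * qp q (4 * (k : ℂ))) / theta p a1 *
      (epoch p q a1 k * epoch p q a4 k * epoch p q a5 k * epoch p q a6 k * epoch p q a7 k *
        epoch p q a8 k * epoch p q a9 k * epoch p q a10 k * qp q (2 * (k : ℂ))) /
      (epoch p q (qp q 2) k * epoch p q (a1 * qp q 2 / a4) k * epoch p q (a1 * qp q 2 / a5) k *
        epoch p q (a1 * qp q 2 / a6) k * epoch p q (a1 * qp q 2 / a7) k *
        epoch p q (a1 * qp q 2 / a8) k * epoch p q (a1 * qp q 2 / a9) k *
        epoch p q (a1 * qp q 2 / a10) k)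

/-- The product of all theta factors appearing in denominators of the terms of
`tenW9 p q n a1 a4 … a10` (including the `θ(a₁)` from the very-well-poised prefactor). -/
def tenW9Den (p q : ℝ) (n : ℕ) (a1 a4 a5 a6 a7 a8 a9 a10 : ℂ) : ℂ :=
  theta p a1 * epoch p q (qp q 2) n * epoch p q (a1 * qp q 2 / a4) n *
    epoch p q (a1 * qp q 2 / a5) n * epoch p q (a1 * qp q 2 / a6) n *
    epoch p q (a1 * qp q 2 / a7) n * epoch p q (a1 * qp q 2 / a8) n *
    epoch p q (a1 * qp q 2 / a9) n * epoch p q (a1 * qp q 2 / a10) n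

namespace ThetaAux

/-- The `j`-th factor of `theta p w`. -/
def T (p : ℝ) (w : ℂ) (j : ℕ) : ℂ := (1 - w * (p : ℂ) ^ j) * (1 - (p : ℂ) ^ (j + 1) / w)

lemma theta_eq (p : ℝ) (w : ℂ) : theta p w = ∏' j : ℕ, T p w j := rfl

/-- The deviation of the `j`-th factor from `1`. -/
def X (p : ℝ) (w : ℂ) (j : ℕ) : ℂ :=
  -(w * (p : ℂ) ^ j) - (p : ℂ) ^ (j + 1) / w + w * (p : ℂ) ^ j * ((p : ℂ) ^ (j + 1) / w)

lemma T_eq (p : ℝ) (w : ℂ) (j : ℕ) : T p w j = 1 + X p w j := by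
  simp only [T, X]; ring

lemma summable_normX {p : ℝ} (hp0 : 0 < p) (hp1 : p < 1) {w : ℂ} (hw : w ≠ 0) :
    Summable (fun j : ℕ => ‖X p w j‖) := by
  have hs : Summable (fun j : ℕ => (‖w‖ + p / ‖w‖ + p) * p ^ j) :=
    (summable_geometric_of_lt_one hp0.le hp1).mul_left _
  refine Summable.of_nonneg_of_le (fun j => norm_nonneg _) (fun j => ?_) hs
  have hpj : ∀ m : ℕ, ‖(p : ℂ) ^ m‖ = p ^ m := fun m => by
    rw [norm_pow, Complex.norm_real, Real.norm_of_nonneg hp0.le]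
  have h1 : ‖X p w j‖ ≤ ‖w * (p:ℂ)^j‖ + ‖(p:ℂ)^(j+1)/w‖ + ‖w * (p:ℂ)^j * ((p:ℂ)^(j+1)/w)‖ := by
    unfold X
    refine le_trans (norm_add_le _ _) ?_
    gcongr
    exact le_trans (norm_sub_le _ _) (by rw [norm_neg])
  have e1 : ‖w * (p:ℂ)^j‖ = ‖w‖ * p ^ j := by rw [norm_mul, hpj]
  have e2 : ‖(p:ℂ)^(j+1)/w‖ = p / ‖w‖ * p ^ j := by
    rw [norm_div, hpj, pow_succ]
    field_simp
  have e3 : ‖w * (p:ℂ)^j * ((p:ℂ)^(j+1)/w)‖ ≤ p * p ^ j := by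
    rw [norm_mul, e1, norm_div, hpj]
    have hwn : ‖w‖ ≠ 0 := norm_ne_zero_iff.mpr hw
    have h4 : ‖w‖ * p ^ j * (p ^ (j + 1) / ‖w‖) = p ^ j * p ^ (j+1) * (‖w‖ / ‖w‖) := by
      ring
    rw [div_self hwn, mul_one] at h4
    rw [h4, pow_succ]
    calc p ^ j * (p ^ j * p) ≤ 1 * (p ^ j * p) := by
          have : p ^ j ≤ 1 := pow_le_one₀ hp0.le hp1.le
          gcongr
      _ = p * p ^ j := by ring
  calc ‖X p w j‖ ≤ ‖w‖ * p ^ j + p / ‖w‖ * p ^ j + p * p ^ j := by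
        rw [← e1, ← e2]; exact le_trans h1 (by gcongr)
    _ = (‖w‖ + p / ‖w‖ + p) * p ^ j := by ring

lemma multipliable_T {p : ℝ} (hp0 : 0 < p) (hp1 : p < 1) {w : ℂ} (hw : w ≠ 0) :
    Multipliable (T p w) := by
  have hsum := summable_normX hp0 hp1 hw
  -- choose N beyond which ‖X‖ ≤ 1/2
  have htend : Filter.Tendsto (fun j => ‖X p w j‖) Filter.atTop (nhds 0) := hsum.tendsto_atTop_zero
  have hev : ∀ᶠ j in Filter.atTop, ‖X p w j‖ ≤ 1/2 :=
    htend.eventually_le_const (by norm_num)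
  obtain ⟨N, hN⟩ := Filter.eventually_atTop.mp hev
  apply Multipliable.comp_nat_add (k := N)
  have hfn : ∀ n : ℕ, T p w (n + N) ≠ 0 := by
    intro n
    rw [T_eq]
    intro h
    have : ‖X p w (n + N)‖ = 1 := by
      have : X p w (n + N) = -1 := by linear_combination h
      rw [this]; simp
    have h2 := hN (n + N) (Nat.le_add_left _ _)
    rw [this] at h2; norm_num at h2
  have hlog : Summable (fun n : ℕ => Complex.log (T p w (n + N))) := by
    have hb : Summable (fun n : ℕ => (3/2) * ‖X p w (n + N)‖) :=
      ((summable_nat_add_iff N).mpr hsum).mul_left _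
    refine Summable.of_norm_bounded hb (fun n => ?_)
    rw [T_eq]
    exact Complex.norm_log_one_add_half_le_self (hN (n + N) (Nat.le_add_left _ _))
  exact Complex.multipliable_of_summable_log (f := fun n => T p w (n + N)) hlog

lemma T_ne_zero {p : ℝ} (hp0 : 0 < p) (hp1 : p < 1) {w : ℂ} (hw : w ≠ 0)
    (hθ : theta p w ≠ 0) (j : ℕ) : T p w j ≠ 0 := by
  intro h
  apply hθ
  rw [theta_eq]
  have hm := (multipliable_T hp0 hp1 hw).hasProd
  have h0 : Filter.Tendsto (fun s : Finset ℕ => ∏ i ∈ s, T p w i) Filter.atTop (nhds 0) := by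
    have : ∀ᶠ s : Finset ℕ in Filter.atTop, ∏ i ∈ s, T p w i = 0 := by
      filter_upwards [Filter.eventually_ge_atTop ({j} : Finset ℕ)] with s hs
      exact Finset.prod_eq_zero (hs (Finset.mem_singleton_self j)) h
    exact Filter.Tendsto.congr' (Filter.EventuallyEq.symm this) tendsto_const_nhds
  exact tendsto_nhds_unique hm h0


lemma telescope (p : ℝ) (w : ℂ) (N : ℕ) :
    (∏ j ∈ Finset.range N, T p w⁻¹ j) * ((1 - w) * (1 - (p:ℂ)^N * w⁻¹)) =
    (∏ j ∈ Finset.range N, T p w j) * ((1 - w⁻¹) * (1 - (p:ℂ)^N * w)) := by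
  induction N with
  | zero => simp only [Finset.range_zero, Finset.prod_empty, pow_zero, one_mul]; ring
  | succ N ih =>
      rw [Finset.prod_range_succ, Finset.prod_range_succ]
      simp only [T, div_eq_mul_inv, inv_inv] at *
      linear_combination (1 - (p:ℂ)^(N+1) * w) * (1 - (p:ℂ)^(N+1) * w⁻¹) * ih

lemma theta_inv {p : ℝ} (hp0 : 0 < p) (hp1 : p < 1) {w : ℂ} (hw : w ≠ 0)
    (hθ : theta p w ≠ 0) : theta p w⁻¹ = -w⁻¹ * theta p w := by
  have hw' : w⁻¹ ≠ 0 := inv_ne_zero hw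
  have hmt := multipliable_T hp0 hp1 hw
  have hmt' := multipliable_T hp0 hp1 hw'
  have h1w : (1 - w) ≠ 0 := by
    have h0 := T_ne_zero hp0 hp1 hw hθ 0
    simp only [T, pow_zero, mul_one] at h0
    exact fun h => h0 (by rw [h, zero_mul])
  have hplim : Filter.Tendsto (fun n : ℕ => (p:ℂ)^n) Filter.atTop (nhds 0) := by
    apply tendsto_pow_atTop_nhds_zero_of_norm_lt_one
    rw [Complex.norm_real, Real.norm_of_nonneg hp0.le]; exact hp1
  have hPlim := hmt.hasProd.tendsto_prod_nat
  have hP'lim := hmt'.hasProd.tendsto_prod_nat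
  have hL : Filter.Tendsto
      (fun N : ℕ => (∏ j ∈ Finset.range N, T p w⁻¹ j) * ((1 - w) * (1 - (p:ℂ)^N * w⁻¹)))
      Filter.atTop (nhds ((theta p w⁻¹) * ((1 - w) * (1 - 0 * w⁻¹)))) := by
    exact (theta_eq p w⁻¹ ▸ hP'lim).mul
      (tendsto_const_nhds.mul (tendsto_const_nhds.sub (hplim.mul tendsto_const_nhds)))
  have hR : Filter.Tendsto
      (fun N : ℕ => (∏ j ∈ Finset.range N, T p w j) * ((1 - w⁻¹) * (1 - (p:ℂ)^N * w)))
      Filter.atTop (nhds ((theta p w) * ((1 - w⁻¹) * (1 - 0 * w)))) := by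
    exact (theta_eq p w ▸ hPlim).mul
      (tendsto_const_nhds.mul (tendsto_const_nhds.sub (hplim.mul tendsto_const_nhds)))
  have hLR := tendsto_nhds_unique ((Filter.tendsto_congr (fun N => telescope p w N)).mp hL) hR
  simp only [zero_mul, sub_zero, mul_one] at hLR
  have hkey : theta p w⁻¹ * (1 - w) = -w⁻¹ * theta p w * (1 - w) := by
    rw [hLR]
    have : (1 - w⁻¹) = -w⁻¹ * (1 - w) := by field_simp; ring
    rw [this]; ring
  exact mul_right_cancel₀ h1w hkey

end ThetaAux

open ThetaAux

lemma qp_mul (q : ℝ) (a b : ℂ) : qp q a * qp q b = qp q (a + b) := by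
  simp [qp, add_mul, Complex.exp_add]

lemma qp_ne (q : ℝ) (a : ℂ) : qp q a ≠ 0 := Complex.exp_ne_zero _

lemma qp_inv (q : ℝ) (a : ℂ) : (qp q a)⁻¹ = qp q (-a) := by
  simp [qp, ← Complex.exp_neg, neg_mul]

lemma qzq (q : ℝ) (z a b : ℂ) (h : a + 2 = b) : qp q 2 * z * qp q a = z * qp q b := by
  rw [mul_comm (qp q 2) z, mul_assoc, mul_comm (qp q 2), qp_mul, h]


/-- Intertwining identity corresponding to `γ(z)α(q²z) = α(z)γ(q²z)`:
`C_k(λ,z) A_k(λ−1, q²z) = A_{k−1}(λ,z) C_k(λ−1, q²z)`. -/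
theorem dynrep_gamma_alpha (p q : ℝ) (hp0 : 0 < p) (hp1 : p < 1) (hq0 : 0 < q) (hq1 : q < 1)
    (k : ℕ) (hk : 1 ≤ k) (lam om z : ℂ) (hz : z ≠ 0)
    (h1 : theta p (qp q (-2 * (lam + 1))) ≠ 0)
    (h2 : theta p (qp q (-2 * lam)) ≠ 0)
    (h3 : theta p (z * qp q (om + 1)) ≠ 0)
    (h4 : theta p (qp q 2 * z * qp q (om + 1)) ≠ 0)
    (h5 : theta p (qp q 2) ≠ 0)
    (h6 : theta p (qp q (2 * (lam + 1))) ≠ 0)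
    (h7 : theta p (qp q (2 * lam)) ≠ 0) :
    Ck p q om k lam z * Ak p q om k (lam - 1) (qp q 2 * z) =
      Ak p q om (k - 1) lam z * Ck p q om k (lam - 1) (qp q 2 * z) := by
  obtain ⟨m, rfl⟩ : ∃ m, k = m + 1 := ⟨k - 1, (Nat.succ_pred_eq_of_pos hk).symm⟩
  simp only [Ck, Ak, Nat.add_sub_cancel, Nat.add_eq_zero, Nat.succ_ne_zero, and_false,
    if_false, Nat.cast_add, Nat.cast_one]
  rw [show lam - 1 + 1 = lam from by ring, show ((m:ℂ) + 1 - 1) = (m:ℂ) from by ring]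
  rw [qzq q z (om - 2*((m:ℂ)+1) + 1) (om - 2*(m:ℂ) + 1) (by ring)]
  rw [qzq q z (2*lam - om + 2*((m:ℂ)+1) - 1) (2*(lam+1) - om + 2*((m:ℂ)+1) - 1) (by ring)]
  rw [show (-2*lam - 2*((m:ℂ)+1)) = (-2*(lam+1) - 2*(m:ℂ)) from by ring]
  have hinv1 : theta p (qp q (-2 * (lam + 1)))
      = -(qp q (-2 * (lam + 1))) * theta p (qp q (2 * (lam + 1))) := by
    have h := theta_inv hp0 hp1 (qp_ne q (2 * (lam + 1))) h6
    rw [qp_inv, show -(2 * (lam + 1)) = -2 * (lam + 1) from by ring] at h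
    rw [h]
  have hinv2 : theta p (qp q (-2 * lam)) = -(qp q (-2 * lam)) * theta p (qp q (2 * lam)) := by
    have h := theta_inv hp0 hp1 (qp_ne q (2 * lam)) h7
    rw [qp_inv, show -(2 * lam) = -2 * lam from by ring] at h
    rw [h]
  rw [hinv1, hinv2]
  rw [div_mul_div_comm, div_mul_div_comm, div_eq_div_iff (by simp [h2, h3, h4, h5, h6, h7, qp_ne])
    (by simp [h2, h3, h4, h5, h6, h7, qp_ne])]
  have e1 : qp q (2 * ((m:ℂ) + 1)) * qp q (-(2 * (lam + 1)))
      = qp q (2 * (m:ℂ)) * qp q (-(2 * lam)) := by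
    rw [qp_mul, qp_mul]; congr 1; ring
  rw [show (-(2 * (lam + 1))) = -2 * (lam + 1) from by ring,
    show (-(2 * lam)) = -2 * lam from by ring] at e1
  linear_combination (-1 : ℂ) * (qp q (-(m:ℂ)) * theta p (qp q (2 * ((m:ℂ) + 1))) *
    theta p (qp q (2 * (om - ((m:ℂ) + 1) + 1))) *
    theta p (z * qp q (2 * (lam + 1) - om + 2 * ((m:ℂ) + 1) - 1)) *
    theta p (qp q (-2 * (lam + 1) - 2 * (m:ℂ))) * theta p (z * qp q (om - 2 * (m:ℂ) + 1)) *
    theta p (qp q 2) * theta p (qp q (2 * (lam + 1))) * theta p (z * qp q (om + 1)) *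
    theta p (qp q (2 * lam)) * theta p (qp q 2 * z * qp q (om + 1))) * e1


end
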